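/- Let α, β, γ be pairwise orthogonal nonzero vectors in ℂ^3 (orthogonal with respect to the bilinear form ⟨u,v⟩ = u_1v_1+u_2v_2+u_3v_3). Suppose that for every coordinate i ∈ {1,2,3}, at least one of α_i, β_i, γ_i is zero. Then either one of α, β, γ is the zero vector, or there exists a coordinate i and a permutation of {α,β,γ} such that the first vector is a nonzero multiple of the i-th standard basis vector and the other two vectors have zero i-th coordinate. -/
import Mathlib

private lemma classify12 (v : Fin 3 → ℂ) :
    v = 0 ∨ (∃ i, v i ≠ 0 ∧ ∀ j, j ≠ i → v j = 0) ∨ (∃ i, ∀ j, j ≠ i → v j ≠ 0) := by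
  by_cases h0 : v 0 = 0 <;> by_cases h1 : v 1 = 0 <;> by_cases h2 : v 2 = 0
  · exact Or.inl (funext fun j => by fin_cases j <;> assumption)
  · exact Or.inr (Or.inl ⟨2, h2, fun j hj => by fin_cases j <;> simp_all⟩)
  · exact Or.inr (Or.inl ⟨1, h1, fun j hj => by fin_cases j <;> simp_all⟩)
  · exact Or.inr (Or.inr ⟨0, fun j hj => by fin_cases j <;> simp_all⟩)
  · exact Or.inr (Or.inl ⟨0, h0, fun j hj => by fin_cases j <;> simp_all⟩)
  · exact Or.inr (Or.inr ⟨1, fun j hj => by fin_cases j <;> simp_all⟩)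
  · exact Or.inr (Or.inr ⟨2, fun j hj => by fin_cases j <;> simp_all⟩)
  · exact Or.inr (Or.inr ⟨0, fun j hj => by fin_cases j <;> simp_all⟩)

private lemma core12 (α β γ : Fin 3 → ℂ) (i : Fin 3) (hi : α i ≠ 0)
    (hz : ∀ j, j ≠ i → α j = 0)
    (hαβ : ∑ j, α j * β j = 0) (hαγ : ∑ j, α j * γ j = 0) :
    (∃ c : ℂ, c ≠ 0 ∧ α = c • (Pi.single i 1 : Fin 3 → ℂ)) ∧ β i = 0 ∧ γ i = 0 := by
  have hsum : ∀ w : Fin 3 → ℂ, ∑ j, α j * w j = α i * w i := fun w =>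
    Finset.sum_eq_single i (fun j _ hj => by rw [hz j hj, zero_mul]) (by simp)
  refine ⟨⟨α i, hi, ?_⟩, ?_, ?_⟩
  · funext j
    rcases eq_or_ne j i with rfl | hji
    · simp
    · simp [Pi.single_apply, hji, hz j hji]
  · rw [hsum β] at hαβ
    exact (mul_eq_zero.mp hαβ).resolve_left hi
  · rw [hsum γ] at hαγ
    exact (mul_eq_zero.mp hαγ).resolve_left hi

theorem stmt_12 (α β γ : Fin 3 → ℂ)
    (hαβ : ∑ i, α i * β i = 0) (hαγ : ∑ i, α i * γ i = 0) (hβγ : ∑ i, β i * γ i = 0)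
    (hdeg : ∀ i : Fin 3, α i = 0 ∨ β i = 0 ∨ γ i = 0) :
    (α = 0 ∨ β = 0 ∨ γ = 0) ∨
    (∃ i : Fin 3,
      ((∃ c : ℂ, c ≠ 0 ∧ α = c • (Pi.single i 1 : Fin 3 → ℂ)) ∧ β i = 0 ∧ γ i = 0) ∨
      ((∃ c : ℂ, c ≠ 0 ∧ β = c • (Pi.single i 1 : Fin 3 → ℂ)) ∧ α i = 0 ∧ γ i = 0) ∨
      ((∃ c : ℂ, c ≠ 0 ∧ γ = c • (Pi.single i 1 : Fin 3 → ℂ)) ∧ α i = 0 ∧ β i = 0)) := by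
  have hβα : ∑ i, β i * α i = 0 := by simpa [mul_comm] using hαβ
  have hγα : ∑ i, γ i * α i = 0 := by simpa [mul_comm] using hαγ
  have hγβ : ∑ i, γ i * β i = 0 := by simpa [mul_comm] using hβγ
  rcases classify12 α with hA | ⟨i, hi, hz⟩ | ⟨iα, hPα⟩
  · exact Or.inl (Or.inl hA)
  · exact Or.inr ⟨i, Or.inl (core12 α β γ i hi hz hαβ hαγ)⟩
  rcases classify12 β with hB | ⟨i, hi, hz⟩ | ⟨iβ, hPβ⟩
  · exact Or.inl (Or.inr (Or.inl hB))
  · exact Or.inr ⟨i, Or.inr (Or.inl (core12 β α γ i hi hz hβα hβγ))⟩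
  rcases classify12 γ with hC | ⟨i, hi, hz⟩ | ⟨iγ, hPγ⟩
  · exact Or.inl (Or.inr (Or.inr hC))
  · exact Or.inr ⟨i, Or.inr (Or.inr (core12 γ α β i hi hz hγα hγβ))⟩
  exfalso
  have key : ∀ i : Fin 3, i = iα ∨ i = iβ ∨ i = iγ := by
    intro i
    by_contra h
    push_neg at h
    obtain ⟨h1, h2, h3⟩ := h
    rcases hdeg i with h | h | h
    · exact hPα i h1 h
    · exact hPβ i h2 h
    · exact hPγ i h3 h
  have d0 := key 0
  have d1 := key 1
  have d2 := key 2
  have hac : iα ≠ iγ := by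
    intro h
    subst h
    fin_cases iα <;> fin_cases iβ <;> revert d0 d1 d2 <;> decide
  have hbc : iβ ≠ iγ := by
    intro h
    subst h
    fin_cases iα <;> fin_cases iβ <;> revert d0 d1 d2 <;> decide
  have tα : α iα = 0 ∨ β iα = 0 := by
    rcases hdeg iα with h | h | h
    · exact Or.inl h
    · exact Or.inr h
    · exact absurd h (hPγ iα hac)
  have tβ : α iβ = 0 ∨ β iβ = 0 := by
    rcases hdeg iβ with h | h | h
    · exact Or.inl h
    · exact Or.inr h
    · exact absurd h (hPγ iβ hbc)
  have nzα : α iγ ≠ 0 := hPα iγ (Ne.symm hac)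
  have nzβ : β iγ ≠ 0 := hPβ iγ (Ne.symm hbc)
  rw [Fin.sum_univ_three] at hαβ
  clear hαγ hβγ hβα hγα hγβ hdeg key hPα hPβ hPγ
  rcases tα with tα | tα <;> rcases tβ with tβ | tβ <;>
    fin_cases iα <;> fin_cases iβ <;> fin_cases iγ <;> simp_all
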